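/- Let G be a finite group with |G| invertible in R. The idempotent e_H^G ∈ RB(G) is characterized by the property that e_H^G · α = Φ_H(α) e_H^G for all α ∈ RB(G), where Φ_H is the mark homomorphism at H. -/

import Mathlib

set_option linter.unusedSectionVars false

open Finset in
section
variable {G : Type} [Group G] [Fintype G]

lemma fix_iff (H K : Subgroup G) (g : G) :
    (∀ h ∈ H, h • (g : G ⧸ K) = (g : G ⧸ K)) ↔
      Subgroup.map (MulAut.conj g⁻¹).toMonoidHom H ≤ K := by
  rw [Subgroup.map_le_iff_le_comap]
  constructor
  · intro hf h hh
    have := hf h⁻¹ (inv_mem hh)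
    rw [MulAction.Quotient.smul_mk, QuotientGroup.eq] at this
    simpa [Subgroup.mem_comap, mul_assoc] using this
  · intro hf h hh
    have := K.inv_mem (hf hh)
    rw [MulAction.Quotient.smul_mk, QuotientGroup.eq]
    simpa [Subgroup.mem_comap, mul_assoc, mul_inv_rev] using this

lemma countFix (H K : Subgroup G) :
    Nat.card {x : G ⧸ K // ∀ h ∈ H, h • x = x} * Nat.card K
      = Nat.card {g : G // Subgroup.map (MulAut.conj g⁻¹).toMonoidHom H ≤ K} := by
  classical
  rw [Nat.card_eq_fintype_card, Nat.card_eq_fintype_card, Nat.card_eq_fintype_card,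
    Fintype.card_subtype (p := fun x : G ⧸ K => ∀ h ∈ H, h • x = x),
    Fintype.card_subtype (p := fun g : G => Subgroup.map (MulAut.conj g⁻¹).toMonoidHom H ≤ K)]
  have key : ∀ g ∈ Finset.univ.filter
      (fun g : G => Subgroup.map (MulAut.conj g⁻¹).toMonoidHom H ≤ K),
      (QuotientGroup.mk g : G ⧸ K) ∈ Finset.univ.filter
        (fun x : G ⧸ K => ∀ h ∈ H, h • x = x) := by
    intro g hg
    simp only [Finset.mem_filter, Finset.mem_univ, true_and] at hg ⊢
    exact (fix_iff H K g).mpr hg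
  rw [Finset.card_eq_sum_card_fiberwise key]
  rw [Finset.sum_congr rfl (g := fun _ => Fintype.card K), Finset.sum_const, smul_eq_mul,
    mul_comm]
  intro x hx
  simp only [Finset.mem_filter, Finset.mem_univ, true_and] at hx
  obtain ⟨g₀, rfl⟩ := QuotientGroup.mk_surjective x
  have hg₀ : Subgroup.map (MulAut.conj g₀⁻¹).toMonoidHom H ≤ K := (fix_iff H K g₀).mp hx
  have himg : Finset.univ.filter (fun g : G =>
      Subgroup.map (MulAut.conj g⁻¹).toMonoidHom H ≤ K ∧ (QuotientGroup.mk g : G ⧸ K) = ↑g₀)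
      = Finset.image (fun k : K => g₀ * (k : G)) Finset.univ := by
    ext g
    simp only [Finset.mem_filter, Finset.mem_univ, true_and, Finset.mem_image]
    constructor
    · rintro ⟨-, hq⟩
      have hm : g₀⁻¹ * g ∈ K := by
        rw [QuotientGroup.eq] at hq
        simpa using inv_mem hq
      exact ⟨⟨g₀⁻¹ * g, hm⟩, by simp⟩
    · rintro ⟨k, rfl⟩
      constructor
      · intro x hx'
        simp only [Subgroup.mem_map] at hx'
        obtain ⟨h, hh, rfl⟩ := hx'
        have hmem : g₀⁻¹ * h * g₀ ∈ K := by
          have := hg₀ ⟨h, hh, rfl⟩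
          simpa [mul_assoc] using this
        simp only [MulEquiv.toMonoidHom_eq_coe, MonoidHom.coe_coe, MulAut.conj_apply,
          mul_inv_rev, inv_inv]
        have hk := k.2
        have heq : (↑k)⁻¹ * g₀⁻¹ * h * (g₀ * ↑k) = (↑k)⁻¹ * (g₀⁻¹ * h * g₀) * ↑k := by group
        rw [heq]
        exact K.mul_mem (K.mul_mem (K.inv_mem hk) hmem) hk
      · rw [QuotientGroup.eq]
        simpa using k.2
  rw [Finset.filter_filter, himg,
    Finset.card_image_of_injective _ (fun a b hab => Subtype.coe_injective (mul_left_cancel hab)),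
    Finset.card_univ]

open Finset in
section
variable {G : Type} [Group G] [Fintype G] [Fintype (Subgroup G)]
  [∀ K H : Subgroup G, Decidable (K ≤ H)]

lemma mobius_sum_self (mu : Subgroup G → Subgroup G → ℤ)
    (hmuSelf : ∀ H : Subgroup G, mu H H = 1) (H : Subgroup G) :
    (∑ K ∈ Finset.univ.filter (fun K : Subgroup G => H ≤ K ∧ K ≤ H), mu K H) = 1 := by
  classical
  have : Finset.univ.filter (fun K : Subgroup G => H ≤ K ∧ K ≤ H) = {H} := by
    ext K
    simp only [Finset.mem_filter, Finset.mem_univ, true_and, Finset.mem_singleton]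
    exact ⟨fun ⟨h1, h2⟩ => (le_antisymm h2 h1), fun h => by simp [h]⟩
  rw [this, Finset.sum_singleton, hmuSelf]

lemma mobius_sum_ne (mu : Subgroup G → Subgroup G → ℤ)
    (hmuRec : ∀ K H : Subgroup G, K < H →
      (∑ L ∈ Finset.univ.filter (fun L : Subgroup G => K ≤ L ∧ L ≤ H), mu L H) = 0)
    (L H : Subgroup G) (hne : L ≠ H) :
    (∑ K ∈ Finset.univ.filter (fun K : Subgroup G => L ≤ K ∧ K ≤ H), mu K H) = 0 := by
  by_cases hle : L ≤ H
  · exact hmuRec L H (lt_of_le_of_ne hle hne)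
  · rw [Finset.filter_false_of_mem, Finset.sum_empty]
    intro K _
    simp only [not_and]
    intro h1 h2
    exact hle (le_trans h1 h2)

lemma markSum (mu : Subgroup G → Subgroup G → ℤ)
    (hmuSelf : ∀ H : Subgroup G, mu H H = 1)
    (hmuRec : ∀ K H : Subgroup G, K < H →
      (∑ L ∈ Finset.univ.filter (fun L : Subgroup G => K ≤ L ∧ L ≤ H), mu L H) = 0)
    (H' H : Subgroup G) :
    (∑ K ∈ Finset.univ.filter (fun K : Subgroup G => K ≤ H),
      mu K H * (Nat.card {g : G // Subgroup.map (MulAut.conj g⁻¹).toMonoidHom H' ≤ K} : ℤ))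
      = (Nat.card {g : G // Subgroup.map (MulAut.conj g⁻¹).toMonoidHom H' = H} : ℤ) := by
  classical
  have hcard : ∀ K : Subgroup G,
      (Nat.card {g : G // Subgroup.map (MulAut.conj g⁻¹).toMonoidHom H' ≤ K} : ℤ)
      = ∑ g : G, if Subgroup.map (MulAut.conj g⁻¹).toMonoidHom H' ≤ K then 1 else 0 := by
    intro K
    rw [Nat.card_eq_fintype_card, Fintype.card_subtype, Finset.card_filter]
    push_cast
    rfl
  calc (∑ K ∈ Finset.univ.filter (fun K : Subgroup G => K ≤ H),
      mu K H * (Nat.card {g : G // Subgroup.map (MulAut.conj g⁻¹).toMonoidHom H' ≤ K} : ℤ))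
      = ∑ K ∈ Finset.univ.filter (fun K : Subgroup G => K ≤ H), ∑ g : G,
          (if Subgroup.map (MulAut.conj g⁻¹).toMonoidHom H' ≤ K then mu K H else 0) := by
        refine Finset.sum_congr rfl fun K _ => ?_
        rw [hcard, Finset.mul_sum]
        exact Finset.sum_congr rfl fun g _ => by split <;> simp
    _ = ∑ g : G, ∑ K ∈ Finset.univ.filter (fun K : Subgroup G => K ≤ H),
          (if Subgroup.map (MulAut.conj g⁻¹).toMonoidHom H' ≤ K then mu K H else 0) :=
        Finset.sum_comm
    _ = ∑ g : G, (if Subgroup.map (MulAut.conj g⁻¹).toMonoidHom H' = H then 1 else 0 : ℤ) := by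
        refine Finset.sum_congr rfl fun g _ => ?_
        have hsplit : (∑ K ∈ Finset.univ.filter (fun K : Subgroup G => K ≤ H),
            (if Subgroup.map (MulAut.conj g⁻¹).toMonoidHom H' ≤ K then mu K H else 0))
            = ∑ K ∈ Finset.univ.filter (fun K : Subgroup G =>
                Subgroup.map (MulAut.conj g⁻¹).toMonoidHom H' ≤ K ∧ K ≤ H), mu K H := by
          rw [← Finset.sum_filter, Finset.filter_filter]
          exact Finset.sum_congr (by simp [and_comm]) fun _ _ => rfl
        rw [hsplit]
        by_cases hC : Subgroup.map (MulAut.conj g⁻¹).toMonoidHom H' = H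
        · rw [if_pos hC, hC]
          exact mobius_sum_self mu hmuSelf H
        · rw [if_neg hC]
          exact mobius_sum_ne mu hmuRec _ H hC
    _ = (Nat.card {g : G // Subgroup.map (MulAut.conj g⁻¹).toMonoidHom H' = H} : ℤ) := by
        rw [Nat.card_eq_fintype_card, Fintype.card_subtype, Finset.card_filter]
        push_cast
        rfl
end

open Finset in
section
variable {G : Type} [Group G] [Fintype G]

lemma card_conj_map (g : G) (H : Subgroup G) :
    Nat.card (Subgroup.map (MulAut.conj g⁻¹).toMonoidHom H) = Nat.card H :=
  (Nat.card_congr (H.equivMapOfInjective _ (MulAut.conj g⁻¹).injective).toEquiv).symm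

lemma conj_map_eq_of_le {g : G} {H : Subgroup G}
    (h : Subgroup.map (MulAut.conj g⁻¹).toMonoidHom H ≤ H) :
    Subgroup.map (MulAut.conj g⁻¹).toMonoidHom H = H :=
  Subgroup.eq_of_le_of_card_ge h (le_of_eq (card_conj_map g H).symm)

lemma norm_count (H : Subgroup G) :
    Nat.card {g : G // Subgroup.map (MulAut.conj g⁻¹).toMonoidHom H = H}
      = Nat.card (Subgroup.normalizer (H : Set G)) := by
  refine Nat.card_congr (Equiv.subtypeEquivRight fun g => ?_)
  rw [Subgroup.mem_normalizer_iff'']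
  constructor
  · intro hmap h
    have hmap2 : Subgroup.map (MulAut.conj g).toMonoidHom H = H := by
      conv_lhs => rw [← hmap, Subgroup.map_map]
      have : (MulAut.conj g).toMonoidHom.comp (MulAut.conj g⁻¹).toMonoidHom
          = MonoidHom.id G := by
        ext x
        simp [mul_assoc]
      rw [this]
      exact Subgroup.map_id H
    constructor
    · intro hh
      rw [← hmap]
      exact ⟨h, hh, by simp [mul_assoc]⟩
    · intro hh
      rw [← hmap2]
      exact ⟨g⁻¹ * h * g, hh, by simp [MulAut.conj_apply]; group⟩
  · intro hiff
    ext x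
    constructor
    · rintro ⟨h, hh, rfl⟩
      simpa [mul_assoc] using (hiff h).mp hh
    · intro hx
      refine ⟨g * x * g⁻¹, ?_, by simp [mul_assoc]⟩
      exact (hiff (g * x * g⁻¹)).mpr (by simpa [mul_assoc] using hx)
end

/-- Let `G` be a finite group with `|G|` invertible in `R`.  In the Burnside algebra
`A = RB(G)` (axiomatized by: conjugation-invariant classes `b K = [G/K]`, an `R`-basis
`ℬ i = b (sG i)` over a complete irredundant set `sG` of representatives of conjugacy classes
of subgroups with `[G/G] = 1`, and mark algebra homomorphisms `Φ H` counting `H`-fixed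
points), the idempotent
`e_H^G = (1/|N_G(H)|) Σ_{K ≤ H} |K| μ(K,H) [G/K]` (here `μ` is the Möbius function of the
subgroup lattice, axiomatized by its defining recursion) is characterized by the property
`e_H^G · α = Φ_H(α) · e_H^G` for all `α`: it satisfies this property, `Φ_H(e_H^G) = 1`, and
any `f` satisfying the property equals `Φ_H(f) • e_H^G`. -/
theorem burnside_idempotent_characterization
    {R : Type} [CommRing R] {G : Type} [Group G] [Fintype G]
    [Fintype (Subgroup G)] [∀ K H : Subgroup G, Decidable (K ≤ H)]
    {A : Type} [CommRing A] [Algebra R A]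
    {ι : Type} [Fintype ι] (sG : ι → Subgroup G)
    (hreps : ∀ H : Subgroup G, ∃ (i : ι) (g : G),
      Subgroup.map (MulAut.conj g).toMonoidHom (sG i) = H)
    (hirr : ∀ i j : ι,
      (∃ g : G, Subgroup.map (MulAut.conj g).toMonoidHom (sG i) = sG j) → i = j)
    (b : Subgroup G → A)
    (hbconj : ∀ (g : G) (K : Subgroup G),
      b (Subgroup.map (MulAut.conj g).toMonoidHom K) = b K)
    (ℬ : Module.Basis ι R A) (hbℬ : ∀ i : ι, b (sG i) = ℬ i)
    (itop : ι) (hitop : sG itop = ⊤) (hone : ℬ itop = 1)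
    (Φ : Subgroup G → (A →ₐ[R] R))
    (hΦ : ∀ H K : Subgroup G,
      Φ H (b K) = (Nat.card {x : G ⧸ K // ∀ h ∈ H, h • x = x} : R))
    (hG : IsUnit (Fintype.card G : R))
    (mu : Subgroup G → Subgroup G → ℤ)
    (hmuSelf : ∀ H : Subgroup G, mu H H = 1)
    (hmuRec : ∀ K H : Subgroup G, K < H →
      (∑ L ∈ Finset.univ.filter (fun L : Subgroup G => K ≤ L ∧ L ≤ H), mu L H) = 0)
    (i : ι) (nInv : R)
    (hnInv : nInv * ((Nat.card (Subgroup.normalizer (sG i : Set G)) : R)) = 1)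
    (e : A)
    (he : e = nInv • ∑ K ∈ Finset.univ.filter (fun K : Subgroup G => K ≤ sG i),
      (((Nat.card K : ℤ) * mu K (sG i)) • b K)) :
    (∀ α : A, e * α = Φ (sG i) α • e)
      ∧ Φ (sG i) e = 1
      ∧ (∀ f : A, (∀ α : A, f * α = Φ (sG i) α • f) → f = Φ (sG i) f • e) := by
  classical
  -- value of all marks on e
  have markE : ∀ H' : Subgroup G, Φ H' e = nInv *
      ((Nat.card {g : G // Subgroup.map (MulAut.conj g⁻¹).toMonoidHom H' = sG i} : ℤ) : R) := by
    intro H'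
    rw [he, map_smul, smul_eq_mul]
    congr 1
    rw [map_sum]
    have hterm : ∀ K ∈ Finset.univ.filter (fun K : Subgroup G => K ≤ sG i),
        Φ H' (((Nat.card K : ℤ) * mu K (sG i)) • b K)
        = ((mu K (sG i) *
            (Nat.card {g : G // Subgroup.map (MulAut.conj g⁻¹).toMonoidHom H' ≤ K} : ℤ) : ℤ) : R) := by
      intro K _
      rw [map_zsmul, hΦ, zsmul_eq_mul]
      have hcnt := countFix H' K
      push_cast [← hcnt]
      ring
    rw [Finset.sum_congr rfl hterm, ← Int.cast_sum,
      markSum mu hmuSelf hmuRec H' (sG i)]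
  -- mark at sG i is 1
  have markE_self : Φ (sG i) e = 1 := by
    rw [markE, norm_count]
    push_cast
    exact hnInv
  -- marks at sG j, j ≠ i, vanish
  have markE_ne : ∀ j : ι, j ≠ i → Φ (sG j) e = 0 := by
    intro j hj
    rw [markE]
    have : IsEmpty {g : G // Subgroup.map (MulAut.conj g⁻¹).toMonoidHom (sG j) = sG i} :=
      ⟨fun ⟨g, hg⟩ => hj (hirr j i ⟨g⁻¹, hg⟩)⟩
    rw [Nat.card_of_isEmpty]
    simp
  -- the matrix of marks
  have Mval : ∀ j k : ι, Φ (sG j) (ℬ k)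
      = ((Nat.card {x : G ⧸ sG k // ∀ h ∈ sG j, h • x = x} : ℕ) : R) := by
    intro j k
    rw [← hbℬ, hΦ]
  -- diagonal entries are units
  have unitdiag : ∀ j : ι,
      IsUnit ((Nat.card {x : G ⧸ sG j // ∀ h ∈ sG j, h • x = x} : R)) := by
    intro j
    have h1 := countFix (sG j) (sG j)
    have h2 : Nat.card {g : G // Subgroup.map (MulAut.conj g⁻¹).toMonoidHom (sG j) ≤ sG j}
        = Nat.card {g : G // Subgroup.map (MulAut.conj g⁻¹).toMonoidHom (sG j) = sG j} :=
      Nat.card_congr (Equiv.subtypeEquivRight fun g =>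
        ⟨conj_map_eq_of_le, le_of_eq⟩)
    rw [h2, norm_count] at h1
    have h3 := (Subgroup.normalizer (sG j : Set G)).card_mul_index
    apply isUnit_of_mul_isUnit_left (y := ((Nat.card (sG j) * (Subgroup.normalizer (sG j : Set G)).index : ℕ) : R))
    have : (Nat.card {x : G ⧸ sG j // ∀ h ∈ sG j, h • x = x}
        * (Nat.card (sG j) * (Subgroup.normalizer (sG j : Set G)).index) : ℕ) = Fintype.card G := by
      rw [← mul_assoc, h1, h3, Nat.card_eq_fintype_card]
    rw [← Nat.cast_mul, this]
    exact hG
  -- triangularity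
  have htri : ∀ j k : ι, j ≠ k → Nat.card (sG k) ≤ Nat.card (sG j) →
      Nat.card {x : G ⧸ sG k // ∀ h ∈ sG j, h • x = x} = 0 := by
    intro j k hjk hge
    by_contra h0
    have hne : Nonempty {x : G ⧸ sG k // ∀ h ∈ sG j, h • x = x} :=
      (Nat.card_ne_zero.mp h0).1
    obtain ⟨⟨x, hx⟩⟩ := hne
    obtain ⟨g, rfl⟩ := QuotientGroup.mk_surjective x
    have hle : Subgroup.map (MulAut.conj g⁻¹).toMonoidHom (sG j) ≤ sG k :=
      (fix_iff (sG j) (sG k) g).mp hx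
    have heq : Subgroup.map (MulAut.conj g⁻¹).toMonoidHom (sG j) = sG k :=
      Subgroup.eq_of_le_of_card_ge hle (by rw [card_conj_map]; exact hge)
    exact hjk (hirr j k ⟨g⁻¹, heq⟩)
  -- injectivity of the joint mark homomorphism
  have hinj : ∀ a : A, (∀ j : ι, Φ (sG j) a = 0) → a = 0 := by
    intro a ha
    have hsum : ∀ j : ι, ∑ k : ι, ℬ.repr a k * Φ (sG j) (ℬ k) = 0 := by
      intro j
      have := congrArg (Φ (sG j)) (ℬ.sum_repr a)
      rw [map_sum] at this
      simp only [map_smul, smul_eq_mul] at this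
      rw [this, ha]
    have key : ∀ m : ℕ, ∀ j : ι, Fintype.card G - Nat.card (sG j) < m → ℬ.repr a j = 0 := by
      intro m
      induction m with
      | zero => intro j h; omega
      | succ m ih =>
        intro j hj
        have hsumj := hsum j
        rw [← Finset.add_sum_erase _ _ (Finset.mem_univ j)] at hsumj
        have hzero : ∀ k ∈ Finset.univ.erase j, ℬ.repr a k * Φ (sG j) (ℬ k) = 0 := by
          intro k hk
          have hkj : k ≠ j := (Finset.mem_erase.mp hk).1
          by_cases hcard : Nat.card (sG k) ≤ Nat.card (sG j)
          · rw [Mval, htri j k hkj.symm hcard]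
            simp
          · have hkG : Nat.card (sG k) ≤ Fintype.card G := by
              rw [← Nat.card_eq_fintype_card]
              exact Subgroup.card_le_card_group _
            have := ih k (by omega)
            rw [this, zero_mul]
        rw [Finset.sum_eq_zero hzero, add_zero, Mval] at hsumj
        exact ((unitdiag j).mul_left_eq_zero).mp hsumj
    have hall : ∀ j : ι, ℬ.repr a j = 0 := fun j =>
      key (Fintype.card G + 1) j (by omega)
    calc a = ∑ k : ι, ℬ.repr a k • ℬ k := (ℬ.sum_repr a).symm
    _ = 0 := by simp [hall]
  -- part 1
  have part1 : ∀ α : A, e * α = Φ (sG i) α • e := by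
    intro α
    have hz : ∀ j : ι, Φ (sG j) (e * α - Φ (sG i) α • e) = 0 := by
      intro j
      rw [map_sub, map_mul, map_smul, smul_eq_mul]
      by_cases hji : j = i
      · subst hji
        rw [markE_self]
        ring
      · rw [markE_ne j hji]
        ring
    exact sub_eq_zero.mp (hinj _ hz)
  refine ⟨part1, markE_self, ?_⟩
  intro f hf
  have h1 : f * e = f := by rw [hf e, markE_self, one_smul]
  have h2 : e * f = Φ (sG i) f • e := part1 f
  rw [← h2, mul_comm, h1]
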